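/- Let C' := {x ∈ ℝⁿ : x ≥ 0 entrywise and ‖x‖₂ ≤ 1}. Then for every y ∈ ℝⁿ, the Euclidean projection of y onto C' equals y₊ / max{1, ‖y₊‖₂}, where y₊ is the entrywise positive part of y, i.e. (y₊)_i = max{0, y_i} for all i; that is, y₊ / max{1, ‖y₊‖₂} is the unique minimizer of ‖y − x‖₂² over x ∈ C'. -/

import Mathlib

open RealInnerProductSpace

noncomputable section

/-- The entrywise positive part `y₊` of a vector. -/
def posPart {n : ℕ} (y : EuclideanSpace ℝ (Fin n)) : EuclideanSpace ℝ (Fin n) :=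
  (WithLp.equiv 2 _).symm (fun i => max 0 (y i))

lemma posPart_apply {n : ℕ} (y : EuclideanSpace ℝ (Fin n)) (i : Fin n) :
    posPart y i = max 0 (y i) := rfl

/-- Lemma S-4, projection onto the nonnegative `ℓ₂` ball: for
`C' = {x ∈ ℝⁿ : x ≥ 0, ‖x‖₂ ≤ 1}` and any `y ∈ ℝⁿ`, the point `y₊ / max{1, ‖y₊‖₂}`
is the unique minimizer of `x ↦ ‖y − x‖₂²` over `C'`. -/
theorem projection_onto_nonneg_l2_ball
    (n : ℕ) (hn : 1 ≤ n) (y : EuclideanSpace ℝ (Fin n)) :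
    (max 1 ‖posPart y‖)⁻¹ • posPart y ∈
        {x : EuclideanSpace ℝ (Fin n) | (∀ i, 0 ≤ x i) ∧ ‖x‖ ≤ 1} ∧
    (∀ x : EuclideanSpace ℝ (Fin n), (∀ i, 0 ≤ x i) → ‖x‖ ≤ 1 →
      ‖y - (max 1 ‖posPart y‖)⁻¹ • posPart y‖ ^ 2 ≤ ‖y - x‖ ^ 2) ∧
    (∀ x : EuclideanSpace ℝ (Fin n), (∀ i, 0 ≤ x i) → ‖x‖ ≤ 1 →
      ‖y - x‖ ^ 2 = ‖y - (max 1 ‖posPart y‖)⁻¹ • posPart y‖ ^ 2 →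
      x = (max 1 ‖posPart y‖)⁻¹ • posPart y) := by
  set P := posPart y with hPdef
  set t : ℝ := max 1 ‖P‖ with htdef
  have ht1 : (1:ℝ) ≤ t := le_max_left _ _
  have htP : ‖P‖ ≤ t := le_max_right _ _
  have ht0 : (0:ℝ) < t := lt_of_lt_of_le one_pos ht1
  set p : EuclideanSpace ℝ (Fin n) := t⁻¹ • P with hpdef
  have hPapp : ∀ i, P i = max 0 (y i) := fun i => rfl
  have hpapp : ∀ i, p i = t⁻¹ * P i := fun i => rfl
  have hmem1 : ∀ i, 0 ≤ p i := fun i => by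
    rw [hpapp, hPapp]
    positivity
  have hmem2 : ‖p‖ ≤ 1 := by
    rw [hpdef, norm_smul, norm_inv, Real.norm_eq_abs, abs_of_pos ht0]
    rw [inv_mul_le_iff₀ ht0]
    simpa using htP
  -- key variational inequality
  have key : ∀ x : EuclideanSpace ℝ (Fin n), (∀ i, 0 ≤ x i) → ‖x‖ ≤ 1 →
      ⟪y - p, x - p⟫ ≤ 0 := by
    intro x hx hxn
    have hinx : ⟪y - p, x⟫ ≤ (1 - t⁻¹) * ⟪P, x⟫ := by
      simp only [PiLp.inner_apply, RCLike.inner_apply, conj_trivial, Finset.mul_sum]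
      apply Finset.sum_le_sum
      intro i _
      have h1 : (y - p) i = y i - t⁻¹ * P i := rfl
      rw [h1, hPapp]
      rcases le_or_gt (y i) 0 with h | h
      · rw [max_eq_left h]
        have : y i * x i ≤ 0 := mul_nonpos_of_nonpos_of_nonneg h (hx i)
        simpa [mul_comm] using this
      · rw [max_eq_right h.le]
        ring_nf
        exact le_refl _
    have hinp : ⟪y - p, p⟫ = (1 - t⁻¹) * t⁻¹ * ‖P‖ ^ 2 := by
      have hPP : ⟪P, P⟫ = ‖P‖ ^ 2 := real_inner_self_eq_norm_sq P
      rw [← hPP]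
      simp only [PiLp.inner_apply, RCLike.inner_apply, conj_trivial, Finset.mul_sum]
      apply Finset.sum_congr rfl
      intro i _
      have h1 : (y - p) i = y i - t⁻¹ * P i := rfl
      rw [h1, hpapp, hPapp]
      rcases le_or_gt (y i) 0 with h | h
      · rw [max_eq_left h]; ring
      · rw [max_eq_right h.le]; ring
    have hPx : ⟪P, x⟫ ≤ ‖P‖ := by
      calc ⟪P, x⟫ ≤ ‖P‖ * ‖x‖ := real_inner_le_norm P x
        _ ≤ ‖P‖ * 1 := by nlinarith [norm_nonneg P]
        _ = ‖P‖ := mul_one _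
    have hsplit : ⟪y - p, x - p⟫ = ⟪y - p, x⟫ - ⟪y - p, p⟫ := inner_sub_right _ _ _
    have htfac : 0 ≤ 1 - t⁻¹ := by
      have : t⁻¹ ≤ 1 := by
        rw [inv_le_one_iff₀]; right; exact ht1
      linarith
    have hbound : ⟪y - p, x - p⟫ ≤ (1 - t⁻¹) * (‖P‖ - t⁻¹ * ‖P‖ ^ 2) := by
      rw [hsplit, hinp]
      nlinarith [mul_le_mul_of_nonneg_left hPx htfac]
    rcases max_cases (1:ℝ) ‖P‖ with ⟨h1, h2⟩ | ⟨h1, h2⟩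
    · have : t = 1 := h1
      rw [this] at hbound
      simpa using hbound
    · have ht : t = ‖P‖ := h1
      have hzero : ‖P‖ - t⁻¹ * ‖P‖ ^ 2 = 0 := by
        rw [ht]
        field_simp
        ring
      rw [hzero, mul_zero] at hbound
      exact hbound
  -- expansion identity
  have expand : ∀ x : EuclideanSpace ℝ (Fin n),
      ‖y - x‖ ^ 2 = ‖y - p‖ ^ 2 - 2 * ⟪y - p, x - p⟫ + ‖x - p‖ ^ 2 := by
    intro x
    have h : y - x = (y - p) - (x - p) := by abel
    rw [h, @norm_sub_sq_real]
  refine ⟨⟨hmem1, hmem2⟩, ?_, ?_⟩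
  · intro x hx hxn
    have h1 := key x hx hxn
    have h2 := expand x
    nlinarith [sq_nonneg ‖x - p‖]
  · intro x hx hxn heq
    have h1 := key x hx hxn
    have h2 := expand x
    have h3 : ‖x - p‖ ^ 2 ≤ 0 := by nlinarith
    have h4 : ‖x - p‖ = 0 := by nlinarith [norm_nonneg (x - p), sq_nonneg ‖x - p‖]
    have := norm_eq_zero.mp h4
    exact sub_eq_zero.mp this
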